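/- Let G be a group with the Magnus property and let N ⊴ G be a finite normal subgroup. Then G/N has the Magnus property. -/

import Mathlib

def MagnusProperty (G : Type*) [Group G] : Prop :=
  ∀ g h : G, Subgroup.normalClosure {g} = Subgroup.normalClosure {h} →
    IsConj g h ∨ IsConj g h⁻¹

open Subgroup QuotientGroup in
private lemma comap_normalClosure_mk_singleton {G : Type*} [Group G]
    (N : Subgroup G) [N.Normal] (g : G) :
    comap (mk' N) (normalClosure {(mk' N) g}) = normalClosure {g} ⊔ N := by
  have h1 : ({(mk' N) g} : Set (G ⧸ N)) = (mk' N) '' ({g} : Set G) := by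
    simp
  rw [h1, ← Subgroup.map_normalClosure _ _ (mk'_surjective N),
    Subgroup.comap_map_eq, ker_mk']

open Subgroup QuotientGroup in
theorem magnus_quotient_of_finite_normal (G : Type*) [Group G]
    (hG : MagnusProperty G) (N : Subgroup G) [N.Normal] (hfin : Finite N) :
    MagnusProperty (G ⧸ N) := by
  intro a b hab
  obtain ⟨g, rfl⟩ := mk'_surjective N a
  obtain ⟨h, rfl⟩ := mk'_surjective N b
  -- From equal closures in the quotient, get equality of joins with N.
  have hE : normalClosure {g} ⊔ N = normalClosure {h} ⊔ N := by
    rw [← comap_normalClosure_mk_singleton, ← comap_normalClosure_mk_singleton, hab]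
  -- Lemma B: any lift of mk g or mk h has the same join with N.
  have hB : ∀ x : G, (mk' N) x = (mk' N) g ∨ (mk' N) x = (mk' N) h →
      normalClosure {x} ⊔ N = normalClosure {g} ⊔ N := by
    intro x hx
    rcases hx with hx | hx
    · rw [← comap_normalClosure_mk_singleton, hx, comap_normalClosure_mk_singleton]
    · rw [← comap_normalClosure_mk_singleton, hx, comap_normalClosure_mk_singleton, hE]
  -- Lemma C: descending step.
  have hC : ∀ x z : G, z ∈ normalClosure {x} ⊔ N →
      ∃ y : G, (mk' N) y = (mk' N) z ∧ normalClosure {y} ≤ normalClosure {x} := by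
    intro x z hz
    rw [← SetLike.mem_coe, Subgroup.mul_normal] at hz
    obtain ⟨u, hu, n, hn, rfl⟩ := hz
    refine ⟨u, ?_, ?_⟩
    · have hn1 : (mk' N) n = 1 := by
        rw [← MonoidHom.mem_ker, ker_mk']; exact hn
      rw [map_mul, hn1, mul_one]
    · exact normalClosure_le_normal (by simpa using hu)
  -- The set of candidate lifts.
  set S : Set G := {x : G | (mk' N) x = (mk' N) g ∨ (mk' N) x = (mk' N) h} with hS
  have hSfin : S.Finite := by
    have : S ⊆ (fun n : N => g * (n : G)) '' Set.univ ∪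
        (fun n : N => h * (n : G)) '' Set.univ := by
      intro x hx
      rcases hx with hx | hx
      · left
        have : g⁻¹ * x ∈ N := by
          have := (QuotientGroup.eq (s := N)).mp hx.symm
          simpa using this
        exact ⟨⟨g⁻¹ * x, this⟩, trivial, by group⟩
      · right
        have : h⁻¹ * x ∈ N := by
          have := (QuotientGroup.eq (s := N)).mp hx.symm
          simpa using this
        exact ⟨⟨h⁻¹ * x, this⟩, trivial, by group⟩
    exact Set.Finite.subset (Set.Finite.union
      (Set.Finite.image _ Set.finite_univ) (Set.Finite.image _ Set.finite_univ)) this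
  have hSne : S.Nonempty := ⟨g, Or.inl rfl⟩
  -- Pick a minimal normal closure among lifts.
  obtain ⟨x, hxS, hxmin⟩ : ∃ x ∈ S, ∀ y ∈ S, normalClosure {y} ≤ normalClosure {x} →
      normalClosure {x} = normalClosure {y} := by
    obtain ⟨x, hxS, hxmin⟩ := Set.Finite.exists_minimalFor
      (fun x : G => normalClosure {x}) S hSfin hSne
    exact ⟨x, hxS, fun y hy hle => le_antisymm (hxmin hy hle) hle⟩
  -- g and h both lie in normalClosure {x} ⊔ N.
  have hEx : normalClosure {x} ⊔ N = normalClosure {g} ⊔ N := hB x hxS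
  have hgmem : g ∈ normalClosure {x} ⊔ N := by
    rw [hEx]
    exact Subgroup.mem_sup_left (subset_normalClosure (Set.mem_singleton g))
  have hhmem : h ∈ normalClosure {x} ⊔ N := by
    rw [hEx, hE]
    exact Subgroup.mem_sup_left (subset_normalClosure (Set.mem_singleton h))
  -- Produce a matched pair with equal normal closures.
  have key : ∃ p q : G, (mk' N) p = (mk' N) g ∧ (mk' N) q = (mk' N) h ∧
      normalClosure {p} = normalClosure {q} := by
    rcases hxS with hx | hx
    · obtain ⟨y, hy, hyle⟩ := hC x h hhmem
      have hyS : y ∈ S := Or.inr hy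
      have : normalClosure {x} = normalClosure {y} := hxmin y hyS hyle
      exact ⟨x, y, hx, hy, this⟩
    · obtain ⟨y, hy, hyle⟩ := hC x g hgmem
      have hyS : y ∈ S := Or.inl hy
      have : normalClosure {x} = normalClosure {y} := hxmin y hyS hyle
      exact ⟨y, x, hy, hx, this.symm⟩
  obtain ⟨p, q, hp, hq, hpq⟩ := key
  rcases hG p q hpq with hc | hc
  · left
    have := (mk' N).map_isConj hc
    rwa [hp, hq] at this
  · right
    have := (mk' N).map_isConj hc
    rwa [hp, map_inv, hq] at this
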